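/- Let S ≥ 1 and define v: ℝ^S → ℝ^{2^S} by v(x) := ⊗_{n=1}^{S} (cos(πx_n), sin(πx_n)). Then: (i) for all x, y ∈ ℝ^S, ⟨v(x), v(y)⟩ = ∏_{n=1}^{S} cos(π(x_n − y_n)); and (ii) if x and y are independent random vectors, each with coordinates independent and uniformly distributed on [−1,1], then E[⟨v(x), v(y)⟩²] = 2^{−S}. -/

import Mathlib

open MeasureTheory Real

/-- The vector `v(x) = ⊗_{n=1}^{S} (cos(πx_n), sin(πx_n)) ∈ ℝ^{2^S}` of Pauli expansion
coefficients of the qubit-embedding state of `x` (the index set of `ℝ^{2^S}` is realized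
as `Fin S → Fin 2`). -/
noncomputable def embedCoeff (S : ℕ) (x : Fin S → ℝ) : (Fin S → Fin 2) → ℝ :=
  fun b => ∏ n : Fin S, (if b n = 0 then Real.cos (π * x n) else Real.sin (π * x n))

/-- The uniform probability measure on `[−1,1]`. -/
noncomputable def uniformPM11 : Measure ℝ :=
  (2 : ENNReal)⁻¹ • (volume.restrict (Set.Icc (-1 : ℝ) 1))

instance : IsProbabilityMeasure uniformPM11 := by
  constructor
  simp [uniformPM11, Real.volume_Icc]
  rw [show (1 : ℝ) + 1 = 2 by norm_num, ENNReal.ofReal_ofNat]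
  exact ENNReal.inv_mul_cancel (by norm_num) (by norm_num)

/-- Fubini for a finite product of a fixed measure on ℝ, general-measure version of
`MeasureTheory.integral_fin_nat_prod_eq_prod`. -/
theorem integral_pi_prod_aux {n : ℕ} (μ : Measure ℝ) [SigmaFinite μ]
    (f : Fin n → ℝ → ℝ) :
    ∫ x : Fin n → ℝ, ∏ i, f i (x i) ∂(Measure.pi fun _ => μ) = ∏ i, ∫ t, f i t ∂μ := by
  induction n with
  | zero => simp [measureReal_def, Measure.pi_univ]
  | succ n ih =>
      calc
        _ = ∫ x : ℝ × (Fin n → ℝ), f 0 x.1 * ∏ i : Fin n, f (Fin.succ i) (x.2 i)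
              ∂(μ.prod (Measure.pi fun _ => μ)) := by
          rw [← ((measurePreserving_piFinSuccAbove
            (fun _ : Fin (n+1) => μ) 0).symm).integral_comp']
          simp only [MeasurableEquiv.piFinSuccAbove_symm_apply, Fin.insertNthEquiv,
            Fin.prod_univ_succ, Fin.insertNth_zero, Equiv.coe_fn_mk, Fin.cons_succ,
            Fin.zero_succAbove, Fin.cons_zero, cast_eq]
        _ = (∫ t, f 0 t ∂μ) * ∏ i : Fin n, ∫ t, f (Fin.succ i) t ∂μ := by
          rw [← ih, ← integral_prod_mul]
        _ = _ := by rw [Fin.prod_univ_succ]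

lemma cos_sq_integral (a : ℝ) :
    ∫ t, Real.cos (π * (a - t)) ^ 2 ∂uniformPM11 = 2⁻¹ := by
  have h1 : ∫ t in (-1 : ℝ)..1, Real.cos (π * (a - t)) ^ 2 = 1 := by
    have hderiv : ∀ t ∈ Set.uIcc (-1 : ℝ) 1,
        HasDerivAt (fun t : ℝ => t / 2 - Real.sin (2 * (π * (a - t))) / (4 * π))
          (Real.cos (π * (a - t)) ^ 2) t := by
      intro t _
      have h : HasDerivAt (fun t : ℝ => 2 * (π * (a - t))) (-(2 * π)) t := by
        have := ((hasDerivAt_id t).const_sub a).const_mul π |>.const_mul 2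
        simpa using this
      have hsin := (h.sin).div_const (4 * π)
      have := ((hasDerivAt_id t).div_const 2).sub hsin
      refine HasDerivAt.congr_deriv this ?_
      rw [Real.cos_sq]
      have hπ : π ≠ 0 := Real.pi_ne_zero
      field_simp
      ring
    have := intervalIntegral.integral_eq_sub_of_hasDerivAt hderiv
      (by
        apply Continuous.intervalIntegrable
        continuity)
    rw [this]
    have e1 : 2 * (π * (a - 1)) = 2 * π * a - 2 * π := by ring
    have e2 : 2 * (π * (a - (-1))) = 2 * π * a + 2 * π := by ring
    rw [e1, e2, Real.sin_sub_two_pi, Real.sin_add_two_pi]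
    ring
  rw [uniformPM11, integral_smul_measure, MeasureTheory.integral_Icc_eq_integral_Ioc,
    ← intervalIntegral.integral_of_le (by norm_num : (-1 : ℝ) ≤ 1), h1]
  simp

/-- **Overlap of qubit-embedding coefficient vectors.**
(i) `⟨v(x), v(y)⟩ = ∏_n cos(π(x_n − y_n))` for all `x, y ∈ ℝ^S`; (ii) for independent
`x, y` with coordinates independent and uniform on `[−1,1]`,
`E[⟨v(x), v(y)⟩²] = 2^{−S}`. -/
theorem embedCoeff_inner_and_second_moment (S : ℕ) (hS : 1 ≤ S) :
    (∀ x y : Fin S → ℝ,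
        (∑ b : Fin S → Fin 2, embedCoeff S x b * embedCoeff S y b)
          = ∏ n : Fin S, Real.cos (π * (x n - y n)))
    ∧ (∫ p : (Fin S → ℝ) × (Fin S → ℝ),
          (∑ b : Fin S → Fin 2, embedCoeff S p.1 b * embedCoeff S p.2 b) ^ 2
          ∂((Measure.pi fun _ : Fin S => uniformPM11).prod
              (Measure.pi fun _ : Fin S => uniformPM11)))
        = ((2 : ℝ) ^ S)⁻¹ := by
  have part1 : ∀ x y : Fin S → ℝ,
      (∑ b : Fin S → Fin 2, embedCoeff S x b * embedCoeff S y b)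
        = ∏ n : Fin S, Real.cos (π * (x n - y n)) := by
    intro x y
    unfold embedCoeff
    simp_rw [← Finset.prod_mul_distrib]
    have key := Finset.prod_univ_sum (fun _ : Fin S => (Finset.univ : Finset (Fin 2)))
      (fun n j => (if j = 0 then Real.cos (π * x n) else Real.sin (π * x n)) *
        (if j = 0 then Real.cos (π * y n) else Real.sin (π * y n)))
    rw [Fintype.piFinset_univ] at key
    rw [← key]
    refine Finset.prod_congr rfl fun n _ => ?_
    rw [Fin.sum_univ_two]
    simp only [Fin.isValue, reduceIte, Fin.one_eq_zero_iff, OfNat.ofNat_ne_one, ite_false]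
    rw [mul_sub, Real.cos_sub]
  refine ⟨part1, ?_⟩
  have hcont : Continuous (fun p : (Fin S → ℝ) × (Fin S → ℝ) =>
      (∏ n : Fin S, Real.cos (π * (p.1 n - p.2 n))) ^ 2) := by
    apply Continuous.pow
    exact continuous_finset_prod _ fun n _ => by fun_prop
  have hint : Integrable (fun p : (Fin S → ℝ) × (Fin S → ℝ) =>
      (∏ n : Fin S, Real.cos (π * (p.1 n - p.2 n))) ^ 2)
      ((Measure.pi fun _ : Fin S => uniformPM11).prod
        (Measure.pi fun _ : Fin S => uniformPM11)) := by
    refine Integrable.mono' (integrable_const 1) hcont.aestronglyMeasurable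
      (Filter.Eventually.of_forall fun p => ?_)
    rw [Real.norm_eq_abs, abs_of_nonneg (sq_nonneg _), ← Finset.prod_pow]
    exact Finset.prod_le_one (fun n _ => sq_nonneg _) (fun n _ => Real.cos_sq_le_one _)
  simp_rw [part1]
  rw [MeasureTheory.integral_prod _ hint]
  have inner : ∀ x : Fin S → ℝ,
      (∫ y : Fin S → ℝ, (∏ n : Fin S, Real.cos (π * (x n - y n))) ^ 2
        ∂(Measure.pi fun _ : Fin S => uniformPM11)) = ((2 : ℝ) ^ S)⁻¹ := by
    intro x
    simp_rw [← Finset.prod_pow]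
    rw [integral_pi_prod_aux uniformPM11 (fun n t => Real.cos (π * (x n - t)) ^ 2)]
    simp [cos_sq_integral, inv_pow]
  simp_rw [inner]
  simp
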